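/- The language accepted by a finite deterministic automaton is a regular language, i.e., it is denoted by some regular expression. The proof proceeds by setting up, for each state s_i, the language X_i of words leading from s_i to an accepting state, showing these satisfy a system of right-linear equations with ε-free coefficients, and invoking uniqueness of solutions. -/
import Mathlib

namespace DFARegAux

open Computability

variable {σ α : Type}

/-- `Ok M T p w`: all intermediate states visited when reading `w` from `p`
(i.e., states reached after nonempty proper prefixes) lie in `T`. -/
def Ok (M : DFA α σ) (T : Set σ) : σ → List α → Prop
  | _, [] => True
  | p, a :: w => w = [] ∨ (M.step p a ∈ T ∧ Ok M T (M.step p a) w)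

lemma Ok.nil (M : DFA α σ) (T : Set σ) (p : σ) : Ok M T p [] := trivial

lemma Ok.single (M : DFA α σ) (T : Set σ) (p : σ) (a : α) : Ok M T p [a] := Or.inl rfl

lemma Ok_mono {M : DFA α σ} {T T' : Set σ} (hT : T ⊆ T') :
    ∀ w p, Ok M T p w → Ok M T' p w := by
  intro w
  induction w with
  | nil => intro p _; trivial
  | cons a w ih =>
    intro p h
    rcases h with h | ⟨h1, h2⟩
    · exact Or.inl h
    · exact Or.inr ⟨hT h1, ih _ h2⟩

lemma Ok_univ (M : DFA α σ) : ∀ w p, Ok M Set.univ p w := by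
  intro w
  induction w with
  | nil => intro p; trivial
  | cons a w ih => intro p; exact Or.inr ⟨Set.mem_univ _, ih _⟩

lemma Ok_append {M : DFA α σ} {T : Set σ} :
    ∀ u v p, Ok M T p u → Ok M T (M.evalFrom p u) v → M.evalFrom p u ∈ T →
      Ok M T p (u ++ v) := by
  intro u
  induction u with
  | nil => intro v p _ h2 _; exact h2
  | cons a u ih =>
    intro v p h1 h2 h3
    show Ok M T p (a :: (u ++ v))
    rcases h1 with h1 | ⟨ha, hu⟩
    · subst h1
      rcases List.eq_nil_or_concat v with hv | _
      · subst hv; exact Or.inl rfl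
      · refine Or.inr ⟨?_, ?_⟩
        · simpa using h3
        · simpa using h2
    · refine Or.inr ⟨ha, ih v (M.step p a) hu ?_ ?_⟩
      · simpa [DFA.evalFrom] using h2
      · simpa [DFA.evalFrom] using h3

lemma evalFrom_cons (M : DFA α σ) (p : σ) (a : α) (w : List α) :
    M.evalFrom p (a :: w) = M.evalFrom (M.step p a) w := rfl

/-- Splitting at the first visit of a newly allowed state `r`. -/
lemma Ok_first_split {M : DFA α σ} {S : Set σ} {r : σ} :
    ∀ w p, Ok M (insert r S) p w → ¬ Ok M S p w →
      ∃ u v, w = u ++ v ∧ u ≠ [] ∧ v ≠ [] ∧ M.evalFrom p u = r ∧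
        Ok M S p u ∧ Ok M (insert r S) r v := by
  intro w
  induction w with
  | nil => intro p _ hns; exact absurd trivial hns
  | cons a w ih =>
    intro p h hns
    rcases h with h | ⟨h1, h2⟩
    · exact absurd (Or.inl h) hns
    by_cases hr : M.step p a = r
    · rcases List.eq_nil_or_concat w with hw | ⟨L, b, hw⟩
      · exact absurd (Or.inl hw) hns
      · refine ⟨[a], w, rfl, by simp, by simp [hw], by simpa using hr, Ok.single M S p a, ?_⟩
        rw [hr] at h2; exact h2
    · have h1' : M.step p a ∈ S := by
        rcases h1 with h1 | h1
        · exact absurd h1 hr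
        · exact h1
      have hns' : ¬ Ok M S (M.step p a) w := by
        intro hok
        exact hns (Or.inr ⟨h1', hok⟩)
      obtain ⟨u, v, huv, hu, hv, he, hou, hov⟩ := ih (M.step p a) h2 hns'
      refine ⟨a :: u, v, by simp [huv], by simp, hv, ?_, ?_, hov⟩
      · simpa [evalFrom_cons] using he
      · rcases List.eq_nil_or_concat u with hu0 | _
        · exact absurd hu0 hu
        · exact Or.inr ⟨h1', hou⟩

/-- The language of words leading from `p` to `q` with intermediate states in `T`. -/
def Lang (M : DFA α σ) (T : Set σ) (p q : σ) : Language α :=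
  {w | M.evalFrom p w = q ∧ Ok M T p w}

lemma kstar_mem {M : DFA α σ} {S : Set σ} {r : σ} {m : List α}
    (hm : m ∈ (Lang M S r r)∗) :
    M.evalFrom r m = r ∧ Ok M (insert r S) r m := by
  rw [Language.mem_kstar] at hm
  obtain ⟨L, rfl, hL⟩ := hm
  induction L with
  | nil => exact ⟨rfl, trivial⟩
  | cons c L ih =>
    have hc : c ∈ Lang M S r r := hL c (by simp)
    have ih' := ih fun y hy => hL y (by simp [hy])
    rw [List.flatten_cons]
    constructor
    · rw [DFA.evalFrom_of_append, hc.1, ih'.1]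
    · refine Ok_append c L.flatten r (Ok_mono (Set.subset_insert r S) c r hc.2) ?_ ?_
      · rw [hc.1]; exact ih'.2
      · rw [hc.1]; exact Set.mem_insert r S

lemma split_dir {M : DFA α σ} {S : Set σ} {r q : σ} :
    ∀ (n : ℕ) (w : List α), w.length ≤ n → ∀ p, M.evalFrom p w = q →
      Ok M (insert r S) p w →
      w ∈ Lang M S p q ∨ w ∈ Lang M S p r * ((Lang M S r r)∗ * Lang M S r q) := by
  intro n
  induction n with
  | zero =>
    intro w hw p hev hok
    have : w = [] := List.length_eq_zero_iff.mp (Nat.le_zero.mp hw)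
    subst this
    exact Or.inl ⟨hev, trivial⟩
  | succ n ih =>
    intro w hw p hev hok
    by_cases hS : Ok M S p w
    · exact Or.inl ⟨hev, hS⟩
    obtain ⟨u, v, rfl, hu, hv, he, hou, hov⟩ := Ok_first_split w p hok hS
    have hvlen : v.length ≤ n := by
      rcases List.exists_cons_of_ne_nil hu with ⟨x, xs, rfl⟩
      simp at hw; omega
    have hevv : M.evalFrom r v = q := by
      rw [DFA.evalFrom_of_append, he] at hev; exact hev
    have h := ih v hvlen r hevv hov
    right
    refine Language.append_mem_mul ⟨he, hou⟩ ?_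
    rcases h with ⟨hev1, hok1⟩ | h
    · have hmem : ([] : List α) ++ v ∈ (Lang M S r r)∗ * Lang M S r q :=
        Language.append_mem_mul (Language.nil_mem_kstar _) ⟨hev1, hok1⟩
      simpa using hmem
    · rw [Language.mem_mul] at h
      obtain ⟨c, hc, rest, hrest, hcr⟩ := h
      rw [Language.mem_mul] at hrest
      obtain ⟨m, hmstar, d, hd, hmd⟩ := hrest
      have hcm : c ++ m ∈ (Lang M S r r)∗ := by
        rw [Language.mem_kstar] at hmstar ⊢
        obtain ⟨L, rfl, hL⟩ := hmstar
        refine ⟨c :: L, by simp, ?_⟩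
        intro y hy
        rcases List.mem_cons.mp hy with rfl | hy
        · exact hc
        · exact hL y hy
      have hv2 : (c ++ m) ++ d = v := by rw [← hcr, ← hmd]; simp
      rw [← hv2]
      exact Language.append_mem_mul hcm hd

lemma Lang_insert (M : DFA α σ) (S : Set σ) (r p q : σ) :
    Lang M (insert r S) p q =
      Lang M S p q + Lang M S p r * ((Lang M S r r)∗ * Lang M S r q) := by
  ext w
  rw [Language.mem_add]
  constructor
  · rintro ⟨hev, hok⟩
    exact split_dir w.length w le_rfl p hev hok
  · rintro (⟨hev, hok⟩ | h)
    · exact ⟨hev, Ok_mono (Set.subset_insert r S) w p hok⟩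
    · rw [Language.mem_mul] at h
      obtain ⟨u, hu, rest, hrest, rfl⟩ := h
      rw [Language.mem_mul] at hrest
      obtain ⟨m, hmstar, v, hv, rfl⟩ := hrest
      obtain ⟨hmev, hmok⟩ := kstar_mem hmstar
      have hmv_ev : M.evalFrom r (m ++ v) = q := by
        rw [DFA.evalFrom_of_append, hmev]; exact hv.1
      have hmv_ok : Ok M (insert r S) r (m ++ v) := by
        refine Ok_append m v r hmok ?_ ?_
        · rw [hmev]; exact Ok_mono (Set.subset_insert r S) v r hv.2
        · rw [hmev]; exact Set.mem_insert r S
      constructor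
      · rw [DFA.evalFrom_of_append, hu.1]; exact hmv_ev
      · refine Ok_append u (m ++ v) p
          (Ok_mono (Set.subset_insert r S) u p hu.2) ?_ ?_
        · rw [hu.1]; exact hmv_ok
        · rw [hu.1]; exact Set.mem_insert r S

/-- Sum of a list of regular expressions. -/
def rsum : List (RegularExpression α) → RegularExpression α
  | [] => 0
  | r :: l => r + rsum l

lemma mem_rsum (l : List (RegularExpression α)) (w : List α) :
    w ∈ (rsum l).matches' ↔ ∃ r ∈ l, w ∈ r.matches' := by
  induction l with
  | nil => simp [rsum, RegularExpression.matches'_zero]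
  | cons r l ih =>
    simp only [rsum, RegularExpression.matches'_add, Language.mem_add, ih, List.mem_cons]
    constructor
    · rintro (h | ⟨s, hs, hw⟩)
      · exact ⟨r, Or.inl rfl, h⟩
      · exact ⟨s, Or.inr hs, hw⟩
    · rintro ⟨s, rfl | hs, hw⟩
      · exact Or.inl hw
      · exact Or.inr ⟨s, hs, hw⟩

open Classical in
/-- McNaughton–Yamada regular expression for paths from `p` to `q` with intermediate
states in the list `l`. -/
noncomputable def R (M : DFA α σ) [Fintype α] : List σ → σ → σ → RegularExpression α
  | [], p, q => (if p = q then 1 else 0) +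
      rsum (((Finset.univ : Finset α).filter fun a => M.step p a = q).toList.map
        RegularExpression.char)
  | r :: l, p, q => R M l p q + R M l p r * (R M l r r).star * R M l r q

lemma matches_R (M : DFA α σ) [Fintype α] :
    ∀ (l : List σ) (p q : σ), (R M l p q).matches' = Lang M {s | s ∈ l} p q := by
  intro l
  induction l with
  | nil =>
    intro p q
    ext w
    have hset : {s : σ | s ∈ ([] : List σ)} = (∅ : Set σ) := by simp
    rw [hset]
    simp only [R, RegularExpression.matches'_add, Language.mem_add, mem_rsum]
    constructor
    · rintro (h | ⟨r, hr, hw⟩)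
      · split_ifs at h with hpq
        · rw [RegularExpression.matches'_epsilon] at h
          rcases h with rfl
          exact ⟨hpq, trivial⟩
        · simp [RegularExpression.matches'_zero] at h
      · simp only [List.mem_map, Finset.mem_toList, Finset.mem_filter] at hr
        obtain ⟨a, ⟨_, ha⟩, rfl⟩ := hr
        rw [RegularExpression.matches'_char] at hw
        rcases hw with rfl
        exact ⟨by simpa using ha, Ok.single M ∅ p a⟩
    · rintro ⟨hev, hok⟩
      match w with
      | [] =>
        left
        have : p = q := hev
        simp [this, RegularExpression.matches'_epsilon]
      | [a] =>
        right
        refine ⟨RegularExpression.char a, ?_, ?_⟩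
        · simp only [List.mem_map, Finset.mem_toList, Finset.mem_filter]
          exact ⟨a, ⟨Finset.mem_univ a, by simpa using hev⟩, rfl⟩
        · rw [RegularExpression.matches'_char]; rfl
      | a :: b :: w =>
        rcases hok with h | ⟨h1, _⟩
        · exact absurd h (by simp)
        · exact absurd h1 (Set.notMem_empty _)
  | cons r l ih =>
    intro p q
    have hset : {s : σ | s ∈ r :: l} = insert r {s : σ | s ∈ l} := by
      ext s; simp [List.mem_cons]
    rw [hset]
    show (R M l p q + R M l p r * (R M l r r).star * R M l r q).matches' = _
    rw [Lang_insert]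
    simp only [RegularExpression.matches'_add, RegularExpression.matches'_mul,
      RegularExpression.matches'_star, ih]
    rw [mul_assoc]

end DFARegAux

open DFARegAux in
theorem dfa_language_regular {σ α : Type} [Fintype σ] [Fintype α] (M : DFA α σ) :
    ∃ r : RegularExpression α, r.matches' = M.accepts := by
  classical
  refine ⟨rsum ((Finset.univ : Finset σ).toList.map fun q =>
    if q ∈ M.accept then R M (Finset.univ : Finset σ).toList M.start q else 0), ?_⟩
  have huniv : {s : σ | s ∈ (Finset.univ : Finset σ).toList} = Set.univ := by
    ext s; simp
  ext w
  rw [mem_rsum, DFA.mem_accepts]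
  constructor
  · rintro ⟨re, hre, hw⟩
    simp only [List.mem_map, Finset.mem_toList, Finset.mem_univ, true_and] at hre
    obtain ⟨q, rfl⟩ := hre
    split_ifs at hw with hq
    · rw [matches_R, huniv] at hw
      obtain ⟨hev, -⟩ := hw
      show M.evalFrom M.start w ∈ M.accept
      rw [hev]; exact hq
    · simp [RegularExpression.matches'_zero] at hw
  · intro h
    refine ⟨if M.eval w ∈ M.accept then R M (Finset.univ : Finset σ).toList M.start (M.eval w)
      else 0, ?_, ?_⟩
    · simp only [List.mem_map, Finset.mem_toList, Finset.mem_univ, true_and]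
      exact ⟨M.eval w, rfl⟩
    · rw [if_pos h, matches_R, huniv]
      exact ⟨rfl, Ok_univ M w M.start⟩
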